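/- arXiv:math/0512126 — 3 statements merged into one kernel-verified Lean document; each statement's English description precedes it below -/
import Mathlib

section
/- Let a and b be two distinct points of the boundary circle S¹. Then the space ℰ of all continuous injective maps E : [0,1] → ℝ² whose image lies in the closed unit disc, with E(0) = a, E(1) = b, and E(s) in the open unit disc D for all s ∈ (0,1), topologized with the compact-open topology, is a contractible topological space. -/
open Set

/-- The open unit disc in `ℝ² = ℂ`. -/
def Disc : Set ℂ := {z : ℂ | ‖z‖ < 1}

namespace ArcContract

lemma unit_sq {a : ℂ} (ha : ‖a‖ = 1) : a.re ^ 2 + a.im ^ 2 = 1 := by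
  have h := Complex.sq_norm a
  rw [ha] at h
  rw [Complex.normSq_apply] at h
  nlinarith [h]

lemma diff_pos {a b : ℂ} (hab : a ≠ b) :
    0 < (a.re - b.re) ^ 2 + (a.im - b.im) ^ 2 := by
  have h : 0 < Complex.normSq (a - b) := Complex.normSq_pos.mpr (sub_ne_zero.mpr hab)
  rw [Complex.normSq_apply, Complex.sub_re, Complex.sub_im] at h
  nlinarith [h]

lemma normSq_expand (z : ℂ) : ‖z‖ ^ 2 = z.re ^ 2 + z.im ^ 2 := by
  rw [Complex.sq_norm, Complex.normSq_apply]; ring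

/-- Key strict convexity fact: a proper convex combination of two distinct unit
vectors has norm `< u + v`. -/
lemma norm_combo_lt {a b : ℂ} (ha : ‖a‖ = 1) (hb : ‖b‖ = 1) (hab : a ≠ b)
    {u v : ℝ} (hu : 0 < u) (hv : 0 < v) :
    ‖(u : ℂ) * a + (v : ℂ) * b‖ < u + v := by
  have h1 := unit_sq ha
  have h2 := unit_sq hb
  have h3 := diff_pos hab
  have hre : ((u : ℂ) * a + (v : ℂ) * b).re = u * a.re + v * b.re := by
    simp [Complex.add_re, Complex.mul_re]
  have him : ((u : ℂ) * a + (v : ℂ) * b).im = u * a.im + v * b.im := by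
    simp [Complex.add_im, Complex.mul_im]
  have hsq : ‖(u : ℂ) * a + (v : ℂ) * b‖ ^ 2
      = (u * a.re + v * b.re) ^ 2 + (u * a.im + v * b.im) ^ 2 := by
    rw [normSq_expand, hre, him]
  have hid : (u + v) ^ 2 - ((u * a.re + v * b.re) ^ 2 + (u * a.im + v * b.im) ^ 2)
      = u * v * ((a.re - b.re) ^ 2 + (a.im - b.im) ^ 2) := by
    linear_combination (-(u ^ 2 + u * v)) * h1 + (-(v ^ 2 + u * v)) * h2
  have hkey : ‖(u : ℂ) * a + (v : ℂ) * b‖ ^ 2 < (u + v) ^ 2 := by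
    rw [hsq]
    have hp := mul_pos (mul_pos hu hv) h3
    linarith
  exact lt_of_pow_lt_pow_left₀ 2 (by positivity) hkey

/-- Key strict fact: `u•a - v•b` has norm `> u - v` for distinct unit vectors. -/
lemma sub_lt_norm {a b : ℂ} (ha : ‖a‖ = 1) (hb : ‖b‖ = 1) (hab : a ≠ b)
    {u v : ℝ} (hu : 0 < u) (hv : 0 < v) :
    u - v < ‖(u : ℂ) * a - (v : ℂ) * b‖ := by
  have h1 := unit_sq ha
  have h2 := unit_sq hb
  have h3 := diff_pos hab
  have hre : ((u : ℂ) * a - (v : ℂ) * b).re = u * a.re - v * b.re := by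
    simp [Complex.sub_re, Complex.mul_re]
  have him : ((u : ℂ) * a - (v : ℂ) * b).im = u * a.im - v * b.im := by
    simp [Complex.sub_im, Complex.mul_im]
  have hsq : ‖(u : ℂ) * a - (v : ℂ) * b‖ ^ 2
      = (u * a.re - v * b.re) ^ 2 + (u * a.im - v * b.im) ^ 2 := by
    rw [normSq_expand, hre, him]
  have hid : ((u * a.re - v * b.re) ^ 2 + (u * a.im - v * b.im) ^ 2) - (u - v) ^ 2
      = u * v * ((a.re - b.re) ^ 2 + (a.im - b.im) ^ 2) := by
    linear_combination (u ^ 2 - u * v) * h1 + (v ^ 2 - u * v) * h2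
  have hkey : (u - v) ^ 2 < ‖(u : ℂ) * a - (v : ℂ) * b‖ ^ 2 := by
    rw [hsq]
    have hp := mul_pos (mul_pos hu hv) h3
    linarith
  exact lt_of_pow_lt_pow_left₀ 2 (norm_nonneg _) hkey


/-- The predicate defining the space of embedded arcs. -/
def Good (a b : ℂ) (E : C(unitInterval, ℂ)) : Prop :=
  Function.Injective ⇑E ∧ (∀ s, ‖E s‖ ≤ 1) ∧ E 0 = a ∧ E 1 = b ∧
    ∀ s : unitInterval, 0 < (s : ℝ) → (s : ℝ) < 1 → E s ∈ Disc

/-- Reparametrization used in the contraction. -/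
noncomputable def sig (t s : unitInterval) : unitInterval :=
  Set.projIcc (0:ℝ) 1 zero_le_one (((s : ℝ) - t) / (1 - t))

/-- The contraction: follow the chord from `a` to `(1-t)a + tb`, then a copy of `E`
shrunk towards `b` by the factor `1 - t`. -/
noncomputable def arcH (a b : ℂ) (E : C(unitInterval, ℂ)) (t s : unitInterval) : ℂ :=
  ((1 - min (s : ℝ) (t : ℝ) : ℝ) : ℂ) * a + ((min (s : ℝ) (t : ℝ) : ℝ) : ℂ) * b
    + ((1 - (t : ℝ) : ℝ) : ℂ) * (E (sig t s) - a)

lemma sig_of_le {t s : unitInterval} (h : (s : ℝ) ≤ t) : sig t s = 0 := by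
  rcases eq_or_lt_of_le t.2.2 with ht | ht
  · unfold sig
    rw [show (1:ℝ) - (t:ℝ) = 0 by rw [ht.symm]; ring, div_zero]
    exact Set.projIcc_left _
  · unfold sig
    have : ((s : ℝ) - t) / (1 - t) ≤ 0 :=
      div_nonpos_of_nonpos_of_nonneg (by linarith) (by linarith)
    exact Set.projIcc_of_le_left _ this

lemma sig_coe {t s : unitInterval} (h1 : (t : ℝ) ≤ s) (h2 : (t : ℝ) < 1) :
    (sig t s : ℝ) = ((s : ℝ) - t) / (1 - t) := by
  have hmem : ((s : ℝ) - t) / (1 - t) ∈ Set.Icc (0:ℝ) 1 := by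
    constructor
    · exact div_nonneg (by linarith) (by linarith)
    · rw [div_le_one (by linarith)]
      have := s.2.2
      linarith
  unfold sig
  rw [Set.projIcc_of_mem _ hmem]

lemma arcH_of_le {a b : ℂ} {E : C(unitInterval, ℂ)} (hE0 : E 0 = a)
    {t s : unitInterval} (h : (s : ℝ) ≤ t) :
    arcH a b E t s = ((1 - (s : ℝ) : ℝ) : ℂ) * a + (((s : ℝ) : ℝ) : ℂ) * b := by
  unfold arcH
  rw [min_eq_left h, sig_of_le h, hE0, sub_self, mul_zero, add_zero]

lemma arcH_of_ge {a b : ℂ} {E : C(unitInterval, ℂ)}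
    {t s : unitInterval} (h1 : (t : ℝ) ≤ s) (h2 : (t : ℝ) < 1) :
    arcH a b E t s = (((t : ℝ) : ℝ) : ℂ) * b
      + ((1 - (t : ℝ) : ℝ) : ℂ) * E (sig t s) := by
  unfold arcH
  rw [min_eq_right h1]
  push_cast
  ring

section Props

variable {a b : ℂ} {E : C(unitInterval, ℂ)}

lemma arcH_continuous (a b : ℂ) (E : C(unitInterval, ℂ)) (t : unitInterval) :
    Continuous fun s => arcH a b E t s := by
  unfold arcH
  have hsig : Continuous fun s : unitInterval => sig t s := by
    unfold sig
    exact continuous_projIcc.comp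
      ((continuous_subtype_val.sub continuous_const).div_const _)
  fun_prop

lemma arcH_norm_le (hG : Good a b E) (ha : ‖a‖ = 1) (hb : ‖b‖ = 1)
    (t s : unitInterval) : ‖arcH a b E t s‖ ≤ 1 := by
  rcases le_or_gt (s : ℝ) (t : ℝ) with h | h
  · rw [arcH_of_le hG.2.2.1 h]
    calc ‖((1 - (s:ℝ) : ℝ) : ℂ) * a + (((s:ℝ) : ℝ) : ℂ) * b‖
        ≤ ‖((1 - (s:ℝ) : ℝ) : ℂ) * a‖ + ‖(((s:ℝ) : ℝ) : ℂ) * b‖ := norm_add_le _ _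
      _ = |1 - (s:ℝ)| * ‖a‖ + |(s:ℝ)| * ‖b‖ := by
          simp only [norm_mul, Complex.norm_real, Real.norm_eq_abs]
          try exact le_rfl
      _ = (1 - (s:ℝ)) + (s:ℝ) := by
          rw [ha, hb, abs_of_nonneg (by linarith [s.2.2] : (0:ℝ) ≤ 1 - s),
            abs_of_nonneg s.2.1]; ring
      _ = 1 := by ring
  · have h2 : (t : ℝ) < 1 := lt_of_lt_of_le h s.2.2
    rw [arcH_of_ge h.le h2]
    calc ‖(((t:ℝ) : ℝ) : ℂ) * b + ((1 - (t:ℝ) : ℝ) : ℂ) * E (sig t s)‖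
        ≤ |(t:ℝ)| * ‖b‖ + |1 - (t:ℝ)| * ‖E (sig t s)‖ := by
          refine (norm_add_le _ _).trans ?_
          simp only [norm_mul, Complex.norm_real, Real.norm_eq_abs]
          try exact le_rfl
      _ ≤ (t:ℝ) * 1 + (1 - (t:ℝ)) * 1 := by
          rw [abs_of_nonneg t.2.1, abs_of_nonneg (by linarith : (0:ℝ) ≤ 1 - t), hb]
          have := hG.2.1 (sig t s)
          nlinarith [t.2.1]
      _ = 1 := by ring

lemma arcH_zero (hG : Good a b E) (t : unitInterval) : arcH a b E t 0 = a := by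
  have h : ((0 : unitInterval) : ℝ) ≤ (t : ℝ) := t.2.1
  rw [arcH_of_le hG.2.2.1 h]
  norm_num

lemma arcH_one (hG : Good a b E) (t : unitInterval) : arcH a b E t 1 = b := by
  rcases lt_or_ge (t : ℝ) 1 with h | h
  · rw [arcH_of_ge (by simpa using t.2.2) h]
    have hs : sig t 1 = 1 := by
      apply Subtype.ext
      rw [sig_coe (by simpa using t.2.2) h]
      simp only [Set.Icc.coe_one]
      rw [div_self (by linarith)]
    rw [hs, hG.2.2.2.1]
    push_cast
    ring
  · have ht : (t : ℝ) = 1 := le_antisymm t.2.2 h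
    rw [arcH_of_le hG.2.2.1 (by rw [ht]; exact (1:unitInterval).2.2)]
    norm_num

lemma arcH_interior (hG : Good a b E) (ha : ‖a‖ = 1) (hb : ‖b‖ = 1) (hab : a ≠ b)
    (t s : unitInterval) (hs0 : 0 < (s : ℝ)) (hs1 : (s : ℝ) < 1) :
    ‖arcH a b E t s‖ < 1 := by
  rcases le_or_gt (s : ℝ) (t : ℝ) with h | h
  · rw [arcH_of_le hG.2.2.1 h]
    have := norm_combo_lt ha hb hab (u := 1 - (s:ℝ)) (v := (s:ℝ)) (by linarith) hs0
    calc ‖((1 - (s:ℝ) : ℝ) : ℂ) * a + (((s:ℝ) : ℝ) : ℂ) * b‖ < (1 - (s:ℝ)) + (s:ℝ) := this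
      _ = 1 := by ring
  · have h2 : (t : ℝ) < 1 := h.trans hs1
    rw [arcH_of_ge h.le h2]
    have hσ : (sig t s : ℝ) = ((s:ℝ) - t) / (1 - t) := sig_coe h.le h2
    have hσ0 : 0 < (sig t s : ℝ) := by
      rw [hσ]; exact div_pos (by linarith) (by linarith)
    have hσ1 : (sig t s : ℝ) < 1 := by
      rw [hσ, div_lt_one (by linarith)]; linarith
    have hD : ‖E (sig t s)‖ < 1 := hG.2.2.2.2 (sig t s) hσ0 hσ1
    calc ‖(((t:ℝ) : ℝ) : ℂ) * b + ((1 - (t:ℝ) : ℝ) : ℂ) * E (sig t s)‖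
        ≤ |(t:ℝ)| * ‖b‖ + |1 - (t:ℝ)| * ‖E (sig t s)‖ := by
          refine (norm_add_le _ _).trans ?_
          simp only [norm_mul, Complex.norm_real, Real.norm_eq_abs]
          try exact le_rfl
      _ = (t:ℝ) * 1 + (1 - (t:ℝ)) * ‖E (sig t s)‖ := by
          rw [abs_of_nonneg t.2.1, abs_of_nonneg (by linarith : (0:ℝ) ≤ 1 - t), hb]
      _ < 1 := by nlinarith [t.2.1]

end Props


lemma chord_inj {a b : ℂ} (hab : a ≠ b) {s u : unitInterval}
    (h : ((1 - (s:ℝ) : ℝ) : ℂ) * a + (((s:ℝ) : ℝ) : ℂ) * b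
       = ((1 - (u:ℝ) : ℝ) : ℂ) * a + (((u:ℝ) : ℝ) : ℂ) * b) : s = u := by
  have hc : (((u:ℝ) - (s:ℝ) : ℝ) : ℂ) * (a - b) = 0 := by
    push_cast at h ⊢
    linear_combination h
  rcases mul_eq_zero.mp hc with h0 | h0
  · apply Subtype.ext
    have : ((u:ℝ) - (s:ℝ) : ℝ) = 0 := by exact_mod_cast h0
    linarith
  · exact absurd (sub_eq_zero.mp h0) hab

lemma arcH_injective {a b : ℂ} {E : C(unitInterval, ℂ)} (hG : Good a b E)
    (ha : ‖a‖ = 1) (hb : ‖b‖ = 1) (hab : a ≠ b) (t : unitInterval) :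
    Function.Injective fun s => arcH a b E t s := by
  have key : ∀ s u : unitInterval, (s : ℝ) ≤ (u : ℝ) →
      arcH a b E t s = arcH a b E t u → s = u := by
    intro s u hsu heq
    rcases le_or_gt (u : ℝ) (t : ℝ) with hut | hut
    · -- both on the chord
      rw [arcH_of_le hG.2.2.1 (hsu.trans hut), arcH_of_le hG.2.2.1 hut] at heq
      exact chord_inj hab heq
    · have ht1 : (t : ℝ) < 1 := hut.trans_le u.2.2
      rcases le_or_gt (t : ℝ) (s : ℝ) with hts | hts
      · -- both on the shrunk copy
        rw [arcH_of_ge hts ht1, arcH_of_ge hut.le ht1] at heq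
        have hE : E (sig t s) = E (sig t u) := by
          have hne : ((1 - (t:ℝ) : ℝ) : ℂ) ≠ 0 := by
            simp only [ne_eq, Complex.ofReal_eq_zero]
            linarith
          have hc : ((1 - (t:ℝ) : ℝ) : ℂ) * (E (sig t s) - E (sig t u)) = 0 := by
            linear_combination heq
          rcases mul_eq_zero.mp hc with h | h
          · exact absurd h hne
          · exact sub_eq_zero.mp h
        have hσ := hG.1 hE
        have : (sig t s : ℝ) = (sig t u : ℝ) := by rw [hσ]
        rw [sig_coe hts ht1, sig_coe hut.le ht1, div_eq_div_iff (by linarith) (by linarith)] at this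
        apply Subtype.ext
        nlinarith
      · -- s on the chord, u on the copy: contradiction via the key inequality
        exfalso
        have h1 : arcH a b E t s = ((1 - (s:ℝ) : ℝ) : ℂ) * a + (((s:ℝ) : ℝ) : ℂ) * b :=
          arcH_of_le hG.2.2.1 hts.le
        have h2 : arcH a b E t u = (((t:ℝ) : ℝ) : ℂ) * b
            + ((1 - (t:ℝ) : ℝ) : ℂ) * E (sig t u) := arcH_of_ge hut.le ht1
        -- distance of the chord point from t•b is > 1 - t
        have hlt : 1 - (t:ℝ) < ‖arcH a b E t s - (((t:ℝ) : ℝ) : ℂ) * b‖ := by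
          have hrw : arcH a b E t s - (((t:ℝ) : ℝ) : ℂ) * b
              = ((1 - (s:ℝ) : ℝ) : ℂ) * a - (((t:ℝ) - (s:ℝ) : ℝ) : ℂ) * b := by
            rw [h1]; push_cast; ring
          rw [hrw]
          have := sub_lt_norm ha hb hab (u := 1 - (s:ℝ)) (v := (t:ℝ) - (s:ℝ))
            (by linarith) (by linarith)
          linarith [this]
        -- distance of the copy point from t•b is ≤ 1 - t
        have hle : ‖arcH a b E t u - (((t:ℝ) : ℝ) : ℂ) * b‖ ≤ 1 - (t:ℝ) := by
          have hrw : arcH a b E t u - (((t:ℝ) : ℝ) : ℂ) * b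
              = ((1 - (t:ℝ) : ℝ) : ℂ) * E (sig t u) := by rw [h2]; ring
          rw [hrw, norm_mul, Complex.norm_real, Real.norm_eq_abs,
            abs_of_nonneg (by linarith : (0:ℝ) ≤ 1 - t)]
          have := hG.2.1 (sig t u)
          nlinarith
        rw [heq] at hlt
        linarith
  intro s u heq
  rcases le_total (s : ℝ) (u : ℝ) with h | h
  · exact key s u h heq
  · exact (key u s h heq.symm).symm

lemma continuousAt_of_tendsto' {α β : Type*} [TopologicalSpace α] [TopologicalSpace β]
    {f : α → β} {x : α} {y : β} (h : Filter.Tendsto f (nhds x) (nhds y)) (hy : f x = y) :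
    ContinuousAt f x := by
  unfold ContinuousAt
  rw [hy]
  exact h

lemma arcH_t0 {a b : ℂ} {E : C(unitInterval, ℂ)} (hE0 : E 0 = a) (s : unitInterval) :
    arcH a b E 0 s = E s := by
  have h1 : ((0 : unitInterval) : ℝ) = 0 := rfl
  have hmin : min ((s : ℝ)) (((0 : unitInterval)) : ℝ) = 0 := by
    rw [h1]; exact min_eq_right s.2.1
  have harg : ((s : ℝ) - ((0 : unitInterval) : ℝ)) / (1 - ((0 : unitInterval) : ℝ))
      = (s : ℝ) := by rw [h1]; norm_num
  have hsig : sig 0 s = s := by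
    unfold sig
    rw [harg]
    exact Set.projIcc_val zero_le_one s
  unfold arcH
  rw [hmin, hsig, h1]
  push_cast
  ring

lemma arcH_t1 {a b : ℂ} {E : C(unitInterval, ℂ)} (hE0 : E 0 = a) (s : unitInterval) :
    arcH a b E 1 s = ((1 - (s : ℝ) : ℝ) : ℂ) * a + (((s : ℝ) : ℝ) : ℂ) * b :=
  arcH_of_le hE0 (by exact_mod_cast s.2.2)

/-- The chord from `a` to `b`, linearly parametrized. -/
noncomputable def chordMap (a b : ℂ) : C(unitInterval, ℂ) :=
  ⟨fun s => ((1 - (s : ℝ) : ℝ) : ℂ) * a + (((s : ℝ) : ℝ) : ℂ) * b, by fun_prop⟩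

lemma chord_good {a b : ℂ} (ha : ‖a‖ = 1) (hb : ‖b‖ = 1) (hab : a ≠ b) :
    Good a b (chordMap a b) := by
  refine ⟨fun s u h => chord_inj hab h, fun s => ?_, by simp [chordMap], by simp [chordMap], ?_⟩
  · show ‖((1 - (s : ℝ) : ℝ) : ℂ) * a + (((s : ℝ) : ℝ) : ℂ) * b‖ ≤ 1
    calc ‖((1 - (s:ℝ) : ℝ) : ℂ) * a + (((s:ℝ) : ℝ) : ℂ) * b‖
        ≤ ‖((1 - (s:ℝ) : ℝ) : ℂ) * a‖ + ‖(((s:ℝ) : ℝ) : ℂ) * b‖ := norm_add_le _ _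
      _ = |1 - (s:ℝ)| * ‖a‖ + |(s:ℝ)| * ‖b‖ := by
          simp only [norm_mul, Complex.norm_real, Real.norm_eq_abs]
      _ = 1 := by
          rw [ha, hb, abs_of_nonneg (by linarith [s.2.2] : (0:ℝ) ≤ 1 - s),
            abs_of_nonneg s.2.1]; ring
  · intro s hs0 hs1
    show ‖((1 - (s : ℝ) : ℝ) : ℂ) * a + (((s : ℝ) : ℝ) : ℂ) * b‖ < 1
    have := norm_combo_lt ha hb hab (u := 1 - (s:ℝ)) (v := (s:ℝ)) (by linarith) hs0
    linarith

/-- Continuity of the "shrunk copy" part of the homotopy, jointly in all variables. -/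
lemma copy_continuous (a b : ℂ) (ha : ‖a‖ = 1) :
    Continuous (fun q : (unitInterval × {E : C(unitInterval, ℂ) // Good a b E}) × unitInterval =>
      ((1 - ((q.1.1 : ℝ)) : ℝ) : ℂ)
        * (((q.1.2 : C(unitInterval, ℂ))) (sig q.1.1 q.2) - a)) := by
  rw [continuous_iff_continuousAt]
  intro q
  by_cases hq : (q.1.1 : ℝ) < 1
  · -- away from `t = 1` everything is a composition of continuous maps
    have hden : ContinuousAt
        (fun q : (unitInterval × {E : C(unitInterval, ℂ) // Good a b E}) × unitInterval =>
          ((q.2 : ℝ) - (q.1.1 : ℝ)) / (1 - (q.1.1 : ℝ))) q := by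
      apply ContinuousAt.div
      · fun_prop
      · fun_prop
      · intro h; rw [sub_eq_zero] at h; exact absurd h.symm (ne_of_lt hq)
    have hsig : ContinuousAt (fun q :
        (unitInterval × {E : C(unitInterval, ℂ) // Good a b E}) × unitInterval =>
        sig q.1.1 q.2) q := by
      unfold sig
      exact continuous_projIcc.continuousAt.comp hden
    have hmap : Continuous (fun q :
        (unitInterval × {E : C(unitInterval, ℂ) // Good a b E}) × unitInterval =>
        (q.1.2 : C(unitInterval, ℂ))) := by fun_prop
    have heval : ContinuousAt (fun q :
        (unitInterval × {E : C(unitInterval, ℂ) // Good a b E}) × unitInterval =>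
        ((q.1.2 : C(unitInterval, ℂ))) (sig q.1.1 q.2)) q := by
      have hpair : ContinuousAt (fun q :
          (unitInterval × {E : C(unitInterval, ℂ) // Good a b E}) × unitInterval =>
          (((q.1.2 : C(unitInterval, ℂ))), sig q.1.1 q.2)) q :=
        hmap.continuousAt.prodMk hsig
      exact (ContinuousEval.continuous_eval.continuousAt).comp hpair
    have hscal : ContinuousAt (fun q :
        (unitInterval × {E : C(unitInterval, ℂ) // Good a b E}) × unitInterval =>
        ((1 - ((q.1.1 : ℝ)) : ℝ) : ℂ)) q := by fun_prop
    exact hscal.mul (heval.sub continuousAt_const)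
  · -- at `t = 1`, squeeze using the factor `1 - t → 0` and the uniform bound on `E`
    have hq1 : (q.1.1 : ℝ) = 1 := le_antisymm q.1.1.2.2 (not_lt.mp hq)
    have hbound : ∀ q' : (unitInterval × {E : C(unitInterval, ℂ) // Good a b E}) × unitInterval,
        ‖((1 - ((q'.1.1 : ℝ)) : ℝ) : ℂ)
          * (((q'.1.2 : C(unitInterval, ℂ))) (sig q'.1.1 q'.2) - a)‖
        ≤ 2 * (1 - (q'.1.1 : ℝ)) := by
      intro q'
      rw [norm_mul, Complex.norm_real, Real.norm_eq_abs,
        abs_of_nonneg (by linarith [q'.1.1.2.2] : (0:ℝ) ≤ 1 - (q'.1.1 : ℝ))]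
      have h1 : ‖((q'.1.2 : C(unitInterval, ℂ))) (sig q'.1.1 q'.2) - a‖ ≤ 2 := by
        refine (norm_sub_le _ _).trans ?_
        have := q'.1.2.2.2.1 (sig q'.1.1 q'.2)
        rw [ha]
        linarith
      nlinarith [q'.1.1.2.2]
    have htend : Filter.Tendsto
        (fun q' : (unitInterval × {E : C(unitInterval, ℂ) // Good a b E}) × unitInterval =>
          2 * (1 - (q'.1.1 : ℝ))) (nhds q) (nhds 0) := by
      have hcont : Continuous
          (fun q' : (unitInterval × {E : C(unitInterval, ℂ) // Good a b E}) × unitInterval =>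
            2 * (1 - (q'.1.1 : ℝ))) := by fun_prop
      have h := hcont.continuousAt (x := q)
      unfold ContinuousAt at h
      convert h using 2
      show (0:ℝ) = 2 * (1 - (q.1.1 : ℝ))
      rw [hq1]
      ring
    refine continuousAt_of_tendsto' (squeeze_zero_norm hbound htend) ?_
    rw [hq1]
    norm_num

end ArcContract

open ArcContract in
/-- Claim `ℰ_Δ is contractible` from Lemma 5.9: for two distinct boundary points `a`, `b` of
the unit circle, the space of continuous injective maps `E : [0,1] → ℝ² = ℂ` with image in the
closed unit disc, `E 0 = a`, `E 1 = b`, and `E s` in the open unit disc for `0 < s < 1`,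
with the compact-open topology (as a subspace of `C([0,1], ℂ)`), is contractible. -/
theorem contractible_space_of_embedded_arcs (a b : ℂ)
    (ha : ‖a‖ = 1) (hb : ‖b‖ = 1) (hab : a ≠ b) :
    ContractibleSpace {E : C(unitInterval, ℂ) // Function.Injective ⇑E ∧
      (∀ s, ‖E s‖ ≤ 1) ∧ E 0 = a ∧ E 1 = b ∧
      ∀ s : unitInterval, 0 < (s : ℝ) → (s : ℝ) < 1 → E s ∈ Disc} := by
  change ContractibleSpace {E : C(unitInterval, ℂ) // Good a b E}
  rw [contractible_iff_id_nullhomotopic]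
  refine ⟨⟨chordMap a b, chord_good ha hb hab⟩, ?_⟩
  constructor
  -- the underlying map of the homotopy
  have hFc : Continuous (fun p : unitInterval × {E : C(unitInterval, ℂ) // Good a b E} =>
      (⟨fun s => arcH a b (p.2 : C(unitInterval, ℂ)) p.1 s,
        arcH_continuous a b _ p.1⟩ : C(unitInterval, ℂ))) := by
    apply ContinuousMap.continuous_of_continuous_uncurry
    have hcopy := copy_continuous a b ha
    have hchord : Continuous
        (fun q : (unitInterval × {E : C(unitInterval, ℂ) // Good a b E}) × unitInterval =>
          ((1 - min ((q.2 : ℝ)) ((q.1.1 : ℝ)) : ℝ) : ℂ) * a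
            + ((min ((q.2 : ℝ)) ((q.1.1 : ℝ)) : ℝ) : ℂ) * b) := by fun_prop
    exact hchord.add hcopy
  exact
    { toFun := fun p =>
        ⟨⟨fun s => arcH a b (p.2 : C(unitInterval, ℂ)) p.1 s, arcH_continuous a b _ p.1⟩,
          ⟨arcH_injective p.2.2 ha hb hab p.1,
            arcH_norm_le p.2.2 ha hb p.1,
            arcH_zero p.2.2 p.1,
            arcH_one p.2.2 p.1,
            fun s h1 h2 => arcH_interior p.2.2 ha hb hab p.1 s h1 h2⟩⟩
      continuous_toFun := hFc.subtype_mk _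
      map_zero_left := by
        intro x
        apply Subtype.ext
        apply ContinuousMap.ext
        intro s
        exact arcH_t0 x.2.2.2.1 s
      map_one_left := by
        intro x
        apply Subtype.ext
        apply ContinuousMap.ext
        intro s
        exact arcH_t1 x.2.2.2.1 s }
end

section
/- Fix t > 0 and let A_t = {x ∈ ℝ² : ‖x‖ > t}. Define F_t : A_t → ℝ² by F_t(x) = (√(‖x‖² − t²)/‖x‖) · x. Then F_t is a homeomorphism from A_t onto ℝ² \ {0}, and it preserves Lebesgue measure: for every measurable set S ⊆ ℝ², the Lebesgue measure of F_t⁻¹(S) ∩ A_t equals the Lebesgue measure of S ∩ (ℝ² \ {0}) (equivalently, the pushforward under F_t of Lebesgue measure restricted to A_t is Lebesgue measure restricted to ℝ² \ {0}). -/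
open MeasureTheory

/-- The exterior `A_t = {x : ‖x‖ > t}` of the circle of radius `t` in `ℝ² = ℂ`. -/
def At (t : ℝ) : Set ℂ := {x : ℂ | t < ‖x‖}

/-- The radial map `F_t`, given in polar coordinates by `(r, θ) ↦ (√(r² − t²), θ)`. -/
noncomputable def Ft (t : ℝ) (x : ℂ) : ℂ :=
  (Real.sqrt (‖x‖ ^ 2 - t ^ 2) / ‖x‖) • x

noncomputable def Gt (t : ℝ) (y : ℂ) : ℂ :=
  (Real.sqrt (‖y‖ ^ 2 + t ^ 2) / ‖y‖) • y

lemma norm_Ft {t : ℝ} (h0 : 0 ≤ t) {x : ℂ} (hx : t < ‖x‖) :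
    ‖Ft t x‖ = Real.sqrt (‖x‖ ^ 2 - t ^ 2) := by
  have hxpos : 0 < ‖x‖ := lt_of_le_of_lt h0 hx
  rw [Ft, norm_smul, Real.norm_eq_abs,
    abs_of_nonneg (div_nonneg (Real.sqrt_nonneg _) hxpos.le),
    div_mul_cancel₀ _ hxpos.ne']

lemma norm_Gt {t : ℝ} {y : ℂ} (hy : y ≠ 0) :
    ‖Gt t y‖ = Real.sqrt (‖y‖ ^ 2 + t ^ 2) := by
  have hypos : 0 < ‖y‖ := norm_pos_iff.2 hy
  rw [Gt, norm_smul, Real.norm_eq_abs,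
    abs_of_nonneg (div_nonneg (Real.sqrt_nonneg _) hypos.le),
    div_mul_cancel₀ _ hypos.ne']

lemma Gt_Ft {t : ℝ} (ht : 0 < t) {x : ℂ} (hx : t < ‖x‖) : Gt t (Ft t x) = x := by
  have hxpos : 0 < ‖x‖ := ht.trans hx
  have hsub : 0 < ‖x‖ ^ 2 - t ^ 2 := by nlinarith
  have hg : 0 < Real.sqrt (‖x‖ ^ 2 - t ^ 2) := Real.sqrt_pos.2 hsub
  rw [Gt, norm_Ft ht.le hx, Real.sq_sqrt hsub.le, sub_add_cancel,
    Real.sqrt_sq hxpos.le, Ft, smul_smul]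
  rw [div_mul_div_comm, mul_comm, div_self (by positivity), one_smul]

lemma Ft_Gt {t : ℝ} (ht : 0 < t) {y : ℂ} (hy : y ≠ 0) : Ft t (Gt t y) = y := by
  have hypos : 0 < ‖y‖ := norm_pos_iff.2 hy
  have hadd : 0 < ‖y‖ ^ 2 + t ^ 2 := by positivity
  rw [Ft, norm_Gt hy, Real.sq_sqrt hadd.le, add_sub_cancel_right,
    Real.sqrt_sq hypos.le, Gt, smul_smul]
  rw [div_mul_div_comm, mul_comm, div_self (by positivity), one_smul]

lemma Gt_mem_At {t : ℝ} (ht : 0 < t) {y : ℂ} (hy : y ≠ 0) : Gt t y ∈ At t := by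
  have hypos : 0 < ‖y‖ := norm_pos_iff.2 hy
  have : t = Real.sqrt (t ^ 2) := (Real.sqrt_sq ht.le).symm
  rw [At, Set.mem_setOf_eq, norm_Gt hy, this]
  apply Real.sqrt_lt_sqrt (by positivity)
  nlinarith

lemma Ft_ne_zero {t : ℝ} (ht : 0 < t) {x : ℂ} (hx : t < ‖x‖) : Ft t x ≠ 0 := by
  have hxpos : 0 < ‖x‖ := ht.trans hx
  have hsub : 0 < ‖x‖ ^ 2 - t ^ 2 := by nlinarith
  have : 0 < ‖Ft t x‖ := by rw [norm_Ft ht.le hx]; exact Real.sqrt_pos.2 hsub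
  exact norm_pos_iff.1 this

/-- homeomorphism -/
noncomputable def FtHomeo (t : ℝ) (ht : 0 < t) : ↥(At t) ≃ₜ ↥({(0 : ℂ)}ᶜ : Set ℂ) where
  toFun x := ⟨Ft t x, by simp [Ft_ne_zero ht x.2]⟩
  invFun y := ⟨Gt t y, Gt_mem_At ht (Set.mem_compl_singleton_iff.1 y.2)⟩
  left_inv x := Subtype.ext (Gt_Ft ht x.2)
  right_inv y := Subtype.ext (Ft_Gt ht (Set.mem_compl_singleton_iff.1 y.2))
  continuous_toFun := by
    apply Continuous.subtype_mk
    have hne : ∀ x : ↥(At t), ‖(x : ℂ)‖ ≠ 0 := fun x => (ht.trans x.2).ne'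
    exact ((((continuous_subtype_val.norm.pow 2).sub continuous_const).sqrt).div
      continuous_subtype_val.norm hne).smul continuous_subtype_val
  continuous_invFun := by
    apply Continuous.subtype_mk
    have hne : ∀ y : ↥({(0 : ℂ)}ᶜ : Set ℂ), ‖(y : ℂ)‖ ≠ 0 := fun y =>
      norm_ne_zero_iff.2 (Set.mem_compl_singleton_iff.1 y.2)
    exact ((((continuous_subtype_val.norm.pow 2).add continuous_const).sqrt).div
      continuous_subtype_val.norm hne).smul continuous_subtype_val

noncomputable def FtD (t : ℝ) (x : ℂ) : ℂ →L[ℝ] ℂ :=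
  (Real.sqrt (‖x‖ ^ 2 - t ^ 2) / ‖x‖) • ContinuousLinearMap.id ℝ ℂ +
    ((t ^ 2 / (Real.sqrt (‖x‖ ^ 2 - t ^ 2) * ‖x‖ ^ 3)) • (innerSL ℝ x)).smulRight x

lemma hasFDerivAt_Ft {t : ℝ} (ht : 0 < t) {x : ℂ} (hx : t < ‖x‖) :
    HasFDerivAt (Ft t) (FtD t x) x := by
  have hxpos : 0 < ‖x‖ := ht.trans hx
  have hsub : 0 < ‖x‖ ^ 2 - t ^ 2 := by nlinarith
  have hg : 0 < Real.sqrt (‖x‖ ^ 2 - t ^ 2) := Real.sqrt_pos.2 hsub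
  set g : ℝ := Real.sqrt (‖x‖ ^ 2 - t ^ 2) with hgdef
  set r : ℝ := ‖x‖ with hrdef
  have h1 : HasFDerivAt (fun y : ℂ => ‖y‖ ^ 2 - t ^ 2) (2 • (innerSL ℝ x)) x := by
    simpa using ((hasFDerivAt_id x).norm_sq).sub_const (t ^ 2)
  have h2 : HasFDerivAt (fun y : ℂ => Real.sqrt (‖y‖ ^ 2 - t ^ 2))
      ((1 / (2 * g)) • (2 • (innerSL ℝ x))) x := h1.sqrt hsub.ne'
  have h3 : HasFDerivAt (fun y : ℂ => ‖y‖) ((1 / (2 * r)) • (2 • (innerSL ℝ x))) x := by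
    have hsq : HasFDerivAt (fun y : ℂ => ‖y‖ ^ 2) (2 • (innerSL ℝ x)) x := by
      simpa using (hasFDerivAt_id x).norm_sq
    have := hsq.sqrt (by positivity)
    have heq : (fun y : ℂ => Real.sqrt (‖y‖ ^ 2)) = fun y : ℂ => ‖y‖ :=
      funext fun y => Real.sqrt_sq (norm_nonneg y)
    rw [heq] at this
    simpa [Real.sqrt_sq hxpos.le] using this
  have h4 : HasFDerivAt (fun y : ℂ => ‖y‖⁻¹)
      ((-(r ^ 2)⁻¹) • ((1 / (2 * r)) • (2 • (innerSL ℝ x)))) x :=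
    (hasDerivAt_inv hxpos.ne').comp_hasFDerivAt x h3
  have h5 := (h2.mul h4).smul (hasFDerivAt_id x)
  have hFt : Ft t = fun y : ℂ => (Real.sqrt (‖y‖ ^ 2 - t ^ 2) * ‖y‖⁻¹) • y := by
    funext y; rw [Ft, div_eq_mul_inv]
  rw [hFt]
  have hgsq : g ^ 2 = r ^ 2 - t ^ 2 := Real.sq_sqrt hsub.le
  have hD : FtD t x =
      (g * r⁻¹) • ContinuousLinearMap.id ℝ ℂ +
        (g • (-(r ^ 2)⁻¹) • ((1 / (2 * r)) • (2 • (innerSL ℝ x))) +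
          r⁻¹ • ((1 / (2 * g)) • (2 • (innerSL ℝ x)))).smulRight x := by
    have hop : ((t ^ 2 / (g * r ^ 3)) • (innerSL ℝ x)) =
        (g • (-(r ^ 2)⁻¹) • ((1 / (2 * r)) • (2 • (innerSL ℝ x))) +
          r⁻¹ • ((1 / (2 * g)) • (2 • (innerSL ℝ x)))) := by
      ext y
      simp only [ContinuousLinearMap.add_apply, ContinuousLinearMap.smul_apply,
        ContinuousLinearMap.coe_smul', Pi.smul_apply, smul_eq_mul, smul_smul,
        nsmul_eq_mul, Nat.cast_ofNat]
      generalize ((innerSL ℝ x) y : ℝ) = I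
      field_simp
      ring_nf
      linear_combination I * hgsq
    rw [FtD, div_eq_mul_inv, hop]
  rw [hD]
  exact h5

lemma det_FtD {t : ℝ} (ht : 0 < t) {x : ℂ} (hx : t < ‖x‖) : (FtD t x).det = 1 := by
  have hxpos : 0 < ‖x‖ := ht.trans hx
  have hsub : 0 < ‖x‖ ^ 2 - t ^ 2 := by nlinarith
  have hg : 0 < Real.sqrt (‖x‖ ^ 2 - t ^ 2) := Real.sqrt_pos.2 hsub
  have hgsq : Real.sqrt (‖x‖ ^ 2 - t ^ 2) ^ 2 = ‖x‖ ^ 2 - t ^ 2 := Real.sq_sqrt hsub.le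
  have hab : x.re ^ 2 + x.im ^ 2 = ‖x‖ ^ 2 := by
    rw [Complex.sq_norm, Complex.normSq_apply]; ring
  show LinearMap.det _ = 1
  rw [← LinearMap.det_toMatrix Complex.basisOneI, Matrix.det_fin_two]
  simp only [LinearMap.toMatrix_apply, ContinuousLinearMap.coe_coe, Complex.coe_basisOneI,
    Matrix.cons_val_zero, Matrix.cons_val_one, Matrix.head_cons, FtD,
    ContinuousLinearMap.add_apply, ContinuousLinearMap.smul_apply,
    ContinuousLinearMap.coe_id', id_eq, ContinuousLinearMap.smulRight_apply,
    ContinuousLinearMap.coe_smul', Pi.smul_apply, Complex.coe_basisOneI_repr]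
  simp only [innerSL_apply_apply, Complex.inner, Complex.real_smul, Complex.mul_re, Complex.mul_im,
    Complex.conj_re, Complex.conj_im, Complex.I_re, Complex.I_im, Complex.ofReal_re,
    Complex.ofReal_im, Complex.add_re, Complex.add_im, Complex.one_re, Complex.one_im]
  simp only [smul_eq_mul]
  have h1 : ‖x‖ ≠ 0 := by exact hxpos.ne'
  have h2 : Real.sqrt (‖x‖ ^ 2 - t ^ 2) ≠ 0 := by
    exact hg.ne'
  have hgsq' : Real.sqrt (‖x‖ ^ 2 - t ^ 2) ^ 2 = ‖x‖ ^ 2 - t ^ 2 := by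
    exact hgsq
  have hab' : x.re ^ 2 + x.im ^ 2 = ‖x‖ ^ 2 := by
    exact hab
  field_simp
  ring_nf
  linear_combination (‖x‖ ^ 2 * t ^ 2 * Real.sqrt (‖x‖ ^ 2 - t ^ 2) ^ 2) * hab' +
    (‖x‖ ^ 4 * Real.sqrt (‖x‖ ^ 2 - t ^ 2) ^ 2) * hgsq'

lemma measurable_Ft (t : ℝ) : Measurable (Ft t) := by
  apply Measurable.smul (f := fun x : ℂ => Real.sqrt (‖x‖ ^ 2 - t ^ 2) / ‖x‖) (g := id)
  · exact ((continuous_norm.pow 2).sub continuous_const).sqrt.measurable.div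
      continuous_norm.measurable
  · exact measurable_id

lemma measurableSet_At (t : ℝ) : MeasurableSet (At t) :=
  (isOpen_lt continuous_const continuous_norm).measurableSet

lemma image_Ft_At {t : ℝ} (ht : 0 < t) : Ft t '' At t = {(0 : ℂ)}ᶜ := by
  apply Set.Subset.antisymm
  · rintro _ ⟨x, hx, rfl⟩
    exact Set.mem_compl_singleton_iff.2 (Ft_ne_zero ht hx)
  · intro y hy
    have hy' : y ≠ 0 := Set.mem_compl_singleton_iff.1 hy
    exact ⟨Gt t y, Gt_mem_At ht hy', Ft_Gt ht hy'⟩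

lemma injOn_Ft_At {t : ℝ} (ht : 0 < t) : Set.InjOn (Ft t) (At t) := fun x hx y hy h => by
  rw [← Gt_Ft ht hx, ← Gt_Ft ht hy, h]


/-- Key computation of Proposition 4.1: for `t > 0`, the map
`F_t x = (√(‖x‖² − t²)/‖x‖) · x` is a homeomorphism from `A_t = {‖x‖ > t}` onto
`ℝ² \ {0}`, and it preserves Lebesgue measure: for every measurable `S`,
the measure of `F_t ⁻¹' S ∩ A_t` equals the measure of `S \ {0}`. -/
theorem Ft_homeomorph_and_measure_preserving (t : ℝ) (ht : 0 < t) :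
    (∃ h : ↥(At t) ≃ₜ ↥({(0 : ℂ)}ᶜ : Set ℂ), ∀ x : ↥(At t), (h x : ℂ) = Ft t x) ∧
    (∀ S : Set ℂ, MeasurableSet S →
      volume (Ft t ⁻¹' S ∩ At t) = volume (S \ {0})) := by
  constructor
  · exact ⟨FtHomeo t ht, fun x => rfl⟩
  · intro S hS
    have hsm : MeasurableSet (Ft t ⁻¹' S ∩ At t) :=
      ((measurable_Ft t) hS).inter (measurableSet_At t)
    have hsub : Ft t ⁻¹' S ∩ At t ⊆ At t := Set.inter_subset_right
    have hf' : ∀ x ∈ Ft t ⁻¹' S ∩ At t,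
        HasFDerivWithinAt (Ft t) (FtD t x) (Ft t ⁻¹' S ∩ At t) x := fun x hx =>
      (hasFDerivAt_Ft ht hx.2).hasFDerivWithinAt
    have hinj : Set.InjOn (Ft t) (Ft t ⁻¹' S ∩ At t) := (injOn_Ft_At ht).mono hsub
    have key := lintegral_abs_det_fderiv_eq_addHaar_image volume hsm hf' hinj
    have himg : Ft t '' (Ft t ⁻¹' S ∩ At t) = S \ {0} := by
      rw [Set.image_preimage_inter, image_Ft_At ht, Set.diff_eq]
    rw [himg] at key
    have hone : ∫⁻ x in Ft t ⁻¹' S ∩ At t, ENNReal.ofReal |(FtD t x).det| =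
        ∫⁻ _x in Ft t ⁻¹' S ∩ At t, 1 :=
      setLIntegral_congr_fun hsm (fun x hx => by
        simp [det_FtD ht hx.2])
    rw [hone, setLIntegral_one] at key
    exact key
end

section
/- For θ ∈ ℝ let R_θ ∈ ℋ denote the rotation of the open unit disc D through angle θ about the origin. Then the loop ℓ : [0,1] → ℋ given by ℓ(t) = R_{2πt} (so ℓ(0) = ℓ(1) = id) is not freely null-homotopic in ℋ: there is no continuous map H : [0,1] × [0,1] → ℋ with H(t, 0) = ℓ(t) for all t, H(0, τ) = H(1, τ) for all τ, and H(·, 1) a constant map. -/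
open Complex Real Finset

lemma intValued_eq {f : unitInterval → ℝ} (hf : Continuous f)
    (hint : ∀ τ, ∃ m : ℤ, f τ = m) : f 1 = f 0 := by
  have hA : f ⁻¹' {f 0} = f ⁻¹' Metric.ball (f 0) (1/2) := by
    ext τ
    simp only [Set.mem_preimage, Set.mem_singleton_iff, Metric.mem_ball]
    constructor
    · intro h; rw [h]; simp
    · intro h
      obtain ⟨m, hm⟩ := hint τ
      obtain ⟨m0, hm0⟩ := hint 0
      rw [hm, hm0] at h ⊢
      rw [Real.dist_eq] at h
      have h1 : |(m : ℝ) - (m0 : ℝ)| < 1 := lt_trans h (by norm_num)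
      have h2 : ((|m - m0| : ℤ) : ℝ) < 1 := by push_cast; exact h1
      have h3 : |m - m0| < 1 := by exact_mod_cast h2
      have : m = m0 := by rw [abs_lt] at h3; omega
      rw [this]
  have hopen : IsOpen (f ⁻¹' {f 0}) := by
    rw [hA]; exact Metric.isOpen_ball.preimage hf
  have hclosed : IsClosed (f ⁻¹' {f 0}) := isClosed_singleton.preimage hf
  have huniv : f ⁻¹' {f 0} = Set.univ :=
    IsClopen.eq_univ ⟨hclosed, hopen⟩ ⟨0, rfl⟩
  have : (1 : unitInterval) ∈ f ⁻¹' {f 0} := huniv ▸ Set.mem_univ _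
  exact this

lemma prod_ratio_telescope (f : ℕ → ℂ) (hf : ∀ k, f k ≠ 0) (n : ℕ) :
    ∏ k ∈ Finset.range n, f (k+1) / f k = f n / f 0 := by
  induction n with
  | zero => simp [div_self (hf 0)]
  | succ n ih =>
      rw [Finset.prod_range_succ, ih]
      field_simp
      exact mul_div_mul_left _ _ (hf n)

lemma rot_mem (θ : ℝ) (z : ℂ) (hz : z ∈ Disc) : Complex.exp (θ * Complex.I) * z ∈ Disc := by
  simp only [Disc, Set.mem_setOf_eq] at hz ⊢
  rw [norm_mul, Complex.norm_exp_ofReal_mul_I, one_mul]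
  exact hz

/-- The rotation of the open unit disc through angle `θ` about the origin, i.e. the
restriction to the disc of the linear rotation of `ℝ² = ℂ` through angle `θ`. -/
noncomputable def rotMap (θ : ℝ) : C(Disc, Disc) :=
  ⟨fun z => ⟨Complex.exp (θ * Complex.I) * z, rot_mem θ z z.2⟩,
    (continuous_const.mul continuous_subtype_val).subtype_mk _⟩

lemma rotMap_rotMap (θ : ℝ) (z : Disc) : rotMap (-θ) (rotMap θ z) = z := by
  apply Subtype.ext
  show Complex.exp ((-θ : ℝ) * Complex.I) * (Complex.exp ((θ : ℝ) * Complex.I) * (z : ℂ))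
      = (z : ℂ)
  rw [← mul_assoc, ← Complex.exp_add]
  push_cast
  ring_nf
  simp

lemma isHomeomorph_rotMap (θ : ℝ) : IsHomeomorph (rotMap θ) := by
  refine isHomeomorph_iff_exists_homeomorph.mpr ⟨Homeomorph.mk
    ⟨rotMap θ, rotMap (-θ), fun z => rotMap_rotMap θ z, fun z => ?_⟩
    (rotMap θ).continuous (rotMap (-θ)).continuous, rfl⟩
  have h := rotMap_rotMap (-θ) z
  rwa [neg_neg] at h

/-- Proposition 4.7: the full-rotation loop `t ↦ R_{2πt}` in the space `ℋ` of homeomorphisms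
of the open unit disc (a subspace of `C(D, D)` with the compact-open topology) is not freely
null-homotopic: there is no continuous `H : [0,1] × [0,1] → ℋ` restricting to the loop at
time `0`, matching up the two ends, and constant at time `1`. -/
theorem rotation_loop_not_nullhomotopic :
    ¬ ∃ H : C(unitInterval × unitInterval, {f : C(Disc, Disc) // IsHomeomorph ⇑f}),
      (∀ t : unitInterval, H (t, 0) =
        ⟨rotMap (2 * Real.pi * (t : ℝ)), isHomeomorph_rotMap _⟩) ∧
      (∀ τ : unitInterval, H (0, τ) = H (1, τ)) ∧
      (∃ g, ∀ t : unitInterval, H (t, 1) = g) := by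
  rintro ⟨H, hbot, hside, g, htop⟩
  have hz₀mem : (1/2 : ℂ) ∈ Disc := by
    simp only [Disc, Set.mem_setOf_eq]
    rw [show (1/2 : ℂ) = ((1/2 : ℝ) : ℂ) by norm_num, Complex.norm_real]
    rw [Real.norm_eq_abs, abs_of_pos] <;> norm_num
  have hz₁mem : (0 : ℂ) ∈ Disc := by simp [Disc]
  set z₀ : Disc := ⟨1/2, hz₀mem⟩ with hz₀def
  set z₁ : Disc := ⟨0, hz₁mem⟩ with hz₁def
  set G : unitInterval × unitInterval → ℂ :=
    fun p => (((H p : C(Disc, Disc)) z₀ : ℂ) - ((H p : C(Disc, Disc)) z₁ : ℂ)) with hGdef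
  have hH1cont : Continuous fun p : unitInterval × unitInterval => (H p : C(Disc, Disc)) :=
    continuous_subtype_val.comp H.continuous
  have hGcont : Continuous G := by
    apply Continuous.sub
    · exact continuous_subtype_val.comp
        ((continuous_eval_const z₀).comp hH1cont)
    · exact continuous_subtype_val.comp
        ((continuous_eval_const z₁).comp hH1cont)
  have hGne : ∀ p, G p ≠ 0 := by
    intro p h
    have h2 : ((H p : C(Disc, Disc)) z₀ : ℂ) = ((H p : C(Disc, Disc)) z₁ : ℂ) :=
      sub_eq_zero.mp h
    have h3 : (H p : C(Disc, Disc)) z₀ = (H p : C(Disc, Disc)) z₁ := Subtype.ext h2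
    have h4 : z₀ = z₁ := (H p).2.injective h3
    have h5 : (1/2 : ℂ) = 0 := congrArg Subtype.val h4
    norm_num at h5
  -- minimum of ‖G‖
  obtain ⟨p₀, -, hp₀⟩ := isCompact_univ.exists_isMinOn (⟨(0,0), Set.mem_univ _⟩ :
      (Set.univ : Set (unitInterval × unitInterval)).Nonempty) hGcont.norm.continuousOn
  set m : ℝ := ‖G p₀‖ with hmdef
  have hm : 0 < m := norm_pos_iff.mpr (hGne p₀)
  have hmle : ∀ p, m ≤ ‖G p‖ := fun p => hp₀ (Set.mem_univ p)
  -- uniform continuity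
  obtain ⟨δ, hδpos, hδ⟩ := Metric.uniformContinuous_iff.mp
    (CompactSpace.uniformContinuous_of_continuous hGcont) m hm
  obtain ⟨n₀, hn₀⟩ := exists_nat_one_div_lt hδpos
  set n : ℕ := max (n₀ + 1) 2 with hndef
  have hn2 : 2 ≤ n := le_max_right _ _
  have hnpos : 0 < n := by omega
  have hnR : (0 : ℝ) < n := by exact_mod_cast hnpos
  have hnδ : 1 / (n : ℝ) < δ := by
    refine lt_of_le_of_lt ?_ hn₀
    apply one_div_le_one_div_of_le
    · positivity
    · exact_mod_cast le_max_left (n₀ + 1) 2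
  -- partition points
  set tk : ℕ → unitInterval := fun k => Set.projIcc 0 1 zero_le_one ((k : ℝ) / n) with htkdef
  have htk : ∀ k, k ≤ n → (tk k : ℝ) = (k : ℝ) / n := by
    intro k hk
    have h0 : (0 : ℝ) ≤ (k : ℝ) / n := by positivity
    have h1 : (k : ℝ) / n ≤ 1 := by
      rw [div_le_one hnR]; exact_mod_cast hk
    simp [htkdef, Set.coe_projIcc, min_eq_right h1, max_eq_right h0]
  have htk0 : tk 0 = 0 := by
    apply Subtype.ext; rw [htk 0 (Nat.zero_le n)]; simp
  have htkn : tk n = 1 := by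
    apply Subtype.ext; rw [htk n le_rfl]; field_simp; simp
  -- distance bound
  have hdist : ∀ k, k < n → ∀ τ : unitInterval,
      dist ((tk (k+1), τ) : unitInterval × unitInterval) ((tk k, τ)) < δ := by
    intro k hk τ
    rw [Prod.dist_eq]
    simp only [dist_self]
    rw [max_eq_left dist_nonneg]
    rw [Subtype.dist_eq, htk (k+1) hk, htk k (le_of_lt hk), Real.dist_eq]
    have : ((k+1 : ℕ) : ℝ) / n - (k : ℝ) / n = 1 / n := by push_cast; field_simp; ring
    rw [this, abs_of_pos (by positivity)]
    exact hnδ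
  -- ratio bounds
  have hratio : ∀ k, k < n → ∀ τ : unitInterval,
      ‖G (tk (k+1), τ) / G (tk k, τ) - 1‖ < 1 := by
    intro k hk τ
    have hb : G (tk k, τ) ≠ 0 := hGne _
    rw [div_sub_one hb, norm_div]
    rw [div_lt_one (norm_pos_iff.mpr hb)]
    have hd : dist (G (tk (k+1), τ)) (G (tk k, τ)) < m := hδ (hdist k hk τ)
    rw [dist_eq_norm] at hd
    exact lt_of_lt_of_le hd (hmle _)
  have hslit : ∀ k, k < n → ∀ τ : unitInterval,
      G (tk (k+1), τ) / G (tk k, τ) ∈ Complex.slitPlane := by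
    intro k hk τ
    have := Complex.mem_slitPlane_of_norm_lt_one (hratio k hk τ)
    rwa [add_sub_cancel] at this
  -- the log sum
  set S : unitInterval → ℂ :=
    fun τ => ∑ k ∈ Finset.range n, Complex.log (G (tk (k+1), τ) / G (tk k, τ)) with hSdef
  have hScont : Continuous S := by
    apply continuous_finset_sum
    intro k hk
    have hk' : k < n := Finset.mem_range.mp hk
    have hq : Continuous fun τ : unitInterval => G (tk (k+1), τ) / G (tk k, τ) := by
      apply Continuous.div
      · exact hGcont.comp (Continuous.prodMk_right _)
      · exact hGcont.comp (Continuous.prodMk_right _)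
      · intro τ; exact hGne _
    exact hq.clog fun τ => hslit k hk' τ
  have hSexp : ∀ τ, Complex.exp (S τ) = 1 := by
    intro τ
    rw [hSdef]
    rw [Complex.exp_sum]
    have hcongr : ∀ k ∈ Finset.range n,
        Complex.exp (Complex.log (G (tk (k+1), τ) / G (tk k, τ)))
          = G (tk (k+1), τ) / G (tk k, τ) :=
      fun k _ => Complex.exp_log (div_ne_zero (hGne _) (hGne _))
    rw [Finset.prod_congr rfl hcongr,
      prod_ratio_telescope (fun k => G (tk k, τ)) (fun k => hGne _) n]
    rw [htkn, htk0]
    have hGeq : G (1, τ) = G (0, τ) := by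
      simp only [hGdef]
      rw [← hside τ]
    rw [hGeq, div_self (hGne _)]
  have hint : ∀ τ, ∃ mm : ℤ, (S τ).im / (2 * π) = mm := by
    intro τ
    obtain ⟨mm, hmm⟩ := Complex.exp_eq_one_iff.mp (hSexp τ)
    refine ⟨mm, ?_⟩
    rw [hmm]
    have him : (((mm : ℂ)) * (2 * π * Complex.I)).im = mm * (2 * π) := by
      simp [Complex.mul_im]
    rw [him, mul_div_assoc, div_self (by positivity : (2:ℝ) * π ≠ 0), mul_one]
  -- apply integer-valued lemma
  have hfcont : Continuous fun τ => (S τ).im / (2 * π) :=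
    (Complex.continuous_im.comp hScont).div_const _
  have hkey := intValued_eq hfcont hint
  -- compute S 0
  have hG0 : ∀ t : unitInterval, G (t, 0) =
      Complex.exp (((2 * π * (t : ℝ) : ℝ) : ℂ) * Complex.I) * (1/2) := by
    intro t
    simp only [hGdef]
    rw [hbot t]
    show (Complex.exp (((2 * π * (t : ℝ) : ℝ) : ℂ) * Complex.I) * ((1:ℂ)/2))
        - (Complex.exp (((2 * π * (t : ℝ) : ℝ) : ℂ) * Complex.I) * (0:ℂ))
        = Complex.exp (((2 * π * (t : ℝ) : ℝ) : ℂ) * Complex.I) * (1/2)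
    ring
  have hS0 : S 0 = ((2 * π : ℝ) : ℂ) * Complex.I := by
    show (∑ k ∈ Finset.range n, Complex.log (G (tk (k+1), 0) / G (tk k, 0)))
        = ((2 * π : ℝ) : ℂ) * Complex.I
    have hterm : ∀ k ∈ Finset.range n,
        Complex.log (G (tk (k+1), 0) / G (tk k, 0))
          = ((2 * π / n : ℝ) : ℂ) * Complex.I := by
      intro k hk
      have hk' : k < n := Finset.mem_range.mp hk
      rw [hG0 (tk (k+1)), hG0 (tk k)]
      rw [mul_div_mul_right _ _ (by norm_num : (1/2 : ℂ) ≠ 0)]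
      rw [← Complex.exp_sub]
      have harg : (((2 * π * ((tk (k+1) : ℝ)) : ℝ) : ℂ)) * Complex.I
          - (((2 * π * ((tk k : ℝ)) : ℝ) : ℂ)) * Complex.I
          = ((2 * π / n : ℝ) : ℂ) * Complex.I := by
        rw [htk (k+1) hk', htk k (le_of_lt hk')]
        push_cast
        have hnC : (n : ℂ) ≠ 0 := by exact_mod_cast hnpos.ne'
        field_simp
        ring
      rw [harg]
      apply Complex.log_exp
      · have him : (((2 * π / n : ℝ) : ℂ) * Complex.I).im = 2 * π / n := by
          simp
        rw [him]
        have : (0:ℝ) < 2 * π / n := by positivity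
        linarith [Real.pi_pos]
      · have him : (((2 * π / n : ℝ) : ℂ) * Complex.I).im = 2 * π / n := by
          simp
        rw [him, div_le_iff₀ hnR]
        have : π * 2 ≤ π * n := by
          apply mul_le_mul_of_nonneg_left _ (le_of_lt Real.pi_pos)
          exact_mod_cast hn2
        linarith
    rw [Finset.sum_congr rfl hterm, Finset.sum_const, Finset.card_range]
    rw [nsmul_eq_mul]
    push_cast
    have hnC : (n : ℂ) ≠ 0 := by exact_mod_cast hnpos.ne'
    field_simp
  -- compute S 1
  have hS1 : S 1 = 0 := by
    show (∑ k ∈ Finset.range n, Complex.log (G (tk (k+1), 1) / G (tk k, 1))) = 0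
    apply Finset.sum_eq_zero
    intro k hk
    have hGconst : G (tk (k+1), 1) = G (tk k, 1) := by
      simp only [hGdef]
      rw [htop (tk (k+1)), htop (tk k)]
    rw [hGconst, div_self (hGne _), Complex.log_one]
  rw [hS0, hS1] at hkey
  simp only [Complex.zero_im, zero_div] at hkey
  have him : (((2 * π : ℝ) : ℂ) * Complex.I).im = 2 * π := by simp
  rw [him, div_self (by positivity : (2:ℝ) * π ≠ 0)] at hkey
  exact zero_ne_one hkey
end
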